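/- Let G = (V,E) be a hypergraph, let ẑ ∈ P_FR(G), and let Ḡ be the auxiliary graph constructed from ẑ. For each odd signed closed walk (C,σ) in G there exists a twin walk W̄ in Ḡ with ℓ̄(W̄) ≤ 1 + s, where s := ℓ_{(C,σ)}(ẑ) − 1 is the slack of the simple odd β-cycle inequality of (C,σ) at ẑ; in particular, if ℓ_{(C,σ)}(ẑ) < 1, then ℓ̄(W̄) < 1. -/

import Mathlib

open Finset

namespace BPO

variable {V E : Type} [DecidableEq V]

/-- Building block `s^inc_{e,v}(z) = z_v - z_e`. -/
def sInc (e : E) (v : V) (z : V ⊕ E → ℝ) : ℝ := z (Sum.inl v) - z (Sum.inr e)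

/-- Building block `s^odd_{e,U,W}(z)`. -/
def sOdd (G : E → Finset V) (e : E) (U W : Finset V) (z : V ⊕ E → ℝ) : ℝ :=
  2 * z (Sum.inr e) - 1 + ∑ u ∈ U, (1 - z (Sum.inl u)) + ∑ w ∈ W, (1 - z (Sum.inl w))
    + ∑ v ∈ G e \ (U ∪ W), (2 - 2 * z (Sum.inl v))

/-- Building block `s^one_{e,U,f}(z)`. -/
def sOne (G : E → Finset V) (e : E) (U : Finset V) (f : E) (z : V ⊕ E → ℝ) : ℝ :=
  2 * z (Sum.inr e) - 1 + ∑ u ∈ U, (1 - z (Sum.inl u)) + (1 - z (Sum.inr f))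
    + ∑ v ∈ G e \ (U ∪ G f), (2 - 2 * z (Sum.inl v))

/-- Building block `s^two_{e,f,g}(z)`. -/
def sTwo (G : E → Finset V) (e f g : E) (z : V ⊕ E → ℝ) : ℝ :=
  2 * z (Sum.inr e) - 1 + (1 - z (Sum.inr f)) + (1 - z (Sum.inr g))
    + ∑ v ∈ G e \ (G f ∪ G g), (2 - 2 * z (Sum.inl v))

/-- Membership in the standard relaxation `P_SR(G)`. -/
def memSR (G : E → Finset V) (z : V ⊕ E → ℝ) : Prop :=
  (∀ x, 0 ≤ z x ∧ z x ≤ 1) ∧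
  (∀ e : E, ∀ v ∈ G e, z (Sum.inl v) - z (Sum.inr e) ≥ 0) ∧
  (∀ e : E, (z (Sum.inr e) - 1) + ∑ v ∈ G e, (1 - z (Sum.inl v)) ≥ 0)

/-- Membership in the flower relaxation `P_FR(G)`: standard relaxation plus all
flower inequalities with at most two neighbors. -/
def memFR (G : E → Finset V) (z : V ⊕ E → ℝ) : Prop :=
  memSR G z ∧
  (∀ f e : E, f ≠ e → (G f ∩ G e).Nonempty →
    (z (Sum.inr f) - 1) + (1 - z (Sum.inr e)) + ∑ v ∈ G f \ G e, (1 - z (Sum.inl v)) ≥ 0) ∧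
  (∀ f e₁ e₂ : E, f ≠ e₁ → f ≠ e₂ → e₁ ≠ e₂ →
    (G f ∩ G e₁).Nonempty → (G f ∩ G e₂).Nonempty → G f ∩ G e₁ ∩ G e₂ = ∅ →
    (z (Sum.inr f) - 1) + (1 - z (Sum.inr e₁)) + (1 - z (Sum.inr e₂))
      + ∑ v ∈ G f \ (G e₁ ∪ G e₂), (1 - z (Sum.inl v)) ≥ 0)

/-- The multilinear polytope `P_ML(G)`. -/
def PML (G : E → Finset V) : Set (V ⊕ E → ℝ) :=
  convexHull ℝ { z | (∀ x, z x = 0 ∨ z x = 1) ∧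
    ∀ e : E, z (Sum.inr e) = ∏ v ∈ G e, z (Sum.inl v) }

/-- A closed walk of length `k ≥ 3`, with nodes `ve i ∈ G (ed (i-1)) ∩ G (ed i)`
and consecutive triple intersections empty (indices cyclic via `ZMod k`). -/
def IsClosedWalk (G : E → Finset V) (k : ℕ) (ve : ZMod k → V) (ed : ZMod k → E) : Prop :=
  3 ≤ k ∧ (∀ i, ve i ∈ G (ed (i - 1)) ∩ G (ed i)) ∧
    ∀ i, G (ed (i - 1)) ∩ G (ed i) ∩ G (ed (i + 1)) = ∅

/-- A signature (`true` = `+`, `false` = `-`) is odd if it has an odd number of `-` signs. -/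
def OddSig (k : ℕ) [NeZero k] (sg : ZMod k → Bool) : Prop :=
  Odd (Finset.univ.filter fun i : ZMod k => sg i = false).card

/-- The length function `ℓ_{(C,σ)}(z)` of a signed closed walk. -/
def lenFun (G : E → Finset V) (k : ℕ) [NeZero k] (ve : ZMod k → V) (ed : ZMod k → E)
    (sg : ZMod k → Bool) (z : V ⊕ E → ℝ) : ℝ :=
  (∑ i ∈ Finset.univ.filter
      (fun i : ZMod k => sg (i - 1) = true ∧ sg i = true ∧ sg (i + 1) = true),
      (sInc (ed i) (ve i) z + sInc (ed i) (ve (i + 1)) z))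
  + (∑ i ∈ Finset.univ.filter
      (fun i : ZMod k => sg (i - 1) = false ∧ sg i = false ∧ sg (i + 1) = false),
      sOdd G (ed i) (G (ed i) ∩ G (ed (i - 1))) (G (ed i) ∩ G (ed (i + 1))) z)
  + (∑ i ∈ Finset.univ.filter
      (fun i : ZMod k => sg (i - 1) = true ∧ sg i = true ∧ sg (i + 1) = false),
      sInc (ed i) (ve i) z)
  + (∑ i ∈ Finset.univ.filter
      (fun i : ZMod k => sg (i - 1) = false ∧ sg i = false ∧ sg (i + 1) = true),
      sOne G (ed i) (G (ed i) ∩ G (ed (i - 1))) (ed (i + 1)) z)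
  + (∑ i ∈ Finset.univ.filter
      (fun i : ZMod k => sg (i - 1) = false ∧ sg i = true ∧ sg (i + 1) = true),
      sInc (ed i) (ve (i + 1)) z)
  + (∑ i ∈ Finset.univ.filter
      (fun i : ZMod k => sg (i - 1) = true ∧ sg i = false ∧ sg (i + 1) = false),
      sOne G (ed i) (G (ed i) ∩ G (ed (i + 1))) (ed (i - 1)) z)
  + (∑ i ∈ Finset.univ.filter
      (fun i : ZMod k => sg (i - 1) = true ∧ sg i = false ∧ sg (i + 1) = true),
      sTwo G (ed i) (ed (i - 1)) (ed (i + 1)) z)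

/-- The set `T` of potential subsequent edge triples. -/
def Trip (G : E → Finset V) (e f g : E) : Prop :=
  (G e ∩ G f).Nonempty ∧ (G f ∩ G g).Nonempty ∧ G e ∩ G f ∩ G g = ∅

/-- Nodes of the auxiliary graph: original nodes, intersections, and edges, each signed. -/
inductive AuxNode (V E : Type) : Type
  | vert : V → Bool → AuxNode V E
  | inter : Finset V → Bool → AuxNode V E
  | edge : E → Bool → AuxNode V E

/-- Adjacency in the auxiliary graph `Ḡ`. -/
def auxAdj (G : E → Finset V) : AuxNode V E → AuxNode V E → Prop
  | .vert v p, .edge e q => q = p ∧ v ∈ G e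
  | .edge e q, .vert v p => q = p ∧ v ∈ G e
  | .inter U p, .inter W q =>
      q = !p ∧ ∃ e f g, Trip G e f g ∧ U = G e ∩ G f ∧ W = G f ∩ G g
  | .edge e p, .inter U q => q = !p ∧ ∃ f g, Trip G e f g ∧ U = G f ∩ G g
  | .inter U q, .edge e p => q = !p ∧ ∃ f g, Trip G e f g ∧ U = G f ∩ G g
  | .edge e p, .edge g q => q = !p ∧ ∃ f, Trip G e f g
  | _, _ => False

/-- Edge lengths `ℓ̄` of the auxiliary graph (minimum over all generating triples). -/
noncomputable def auxLen (G : E → Finset V) (z : V ⊕ E → ℝ) :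
    AuxNode V E → AuxNode V E → ℝ
  | .vert v _, .edge e _ => sInc e v z
  | .edge e _, .vert v _ => sInc e v z
  | .inter U _, .inter W _ =>
      sInf { x : ℝ | ∃ e f g, Trip G e f g ∧ U = G e ∩ G f ∧ W = G f ∩ G g
        ∧ x = sOdd G f U W z }
  | .edge e _, .inter U _ =>
      sInf { x : ℝ | ∃ f g, Trip G e f g ∧ U = G f ∩ G g ∧ x = sOne G f U e z }
  | .inter U _, .edge e _ =>
      sInf { x : ℝ | ∃ f g, Trip G e f g ∧ U = G f ∩ G g ∧ x = sOne G f U e z }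
  | .edge e _, .edge g _ =>
      sInf { x : ℝ | ∃ f, Trip G e f g ∧ x = sTwo G f e g z }
  | _, _ => 0

/-- Two auxiliary nodes are twins if they differ only in the sign component. -/
def Twin : AuxNode V E → AuxNode V E → Prop
  | .vert v p, .vert w q => w = v ∧ q = !p
  | .inter U p, .inter W q => W = U ∧ q = !p
  | .edge e p, .edge f q => f = e ∧ q = !p
  | _, _ => False

/-- Total length of a walk (given as the list of visited nodes) in the auxiliary graph. -/
noncomputable def walkLen (G : E → Finset V) (z : V ⊕ E → ℝ) :
    List (AuxNode V E) → ℝ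
  | a :: b :: rest => auxLen G z a b + walkLen G z (b :: rest)
  | _ => 0

/-- A twin walk in the auxiliary graph: a walk whose endpoints are twins. -/
def IsTwinWalk (G : E → Finset V) (L : List (AuxNode V E)) : Prop :=
  L.Chain' (auxAdj G) ∧
  ∃ a b, L.head? = some a ∧ L.getLast? = some b ∧ Twin a b

/-- A cyclically indexed family of (distinct) edges forming a cycle hypergraph. -/
def IsCycleFam (m : ℕ) [NeZero m] (F : ZMod m → Finset V) : Prop :=
  3 ≤ m ∧ Function.Injective F ∧
  (∀ i : ZMod m, (F i ∩ F (i + 1)).Nonempty) ∧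
  (∀ i j : ZMod m, j ≠ i - 1 → j ≠ i → j ≠ i + 1 → F i ∩ F j = ∅) ∧
  (m = 3 → F 0 ∩ F 1 ∩ F 2 = ∅)

end BPO

namespace CWTW
variable {V E : Type} [DecidableEq V]

theorem walkLen_app (G : E → Finset V) (z : V ⊕ E → ℝ) :
    ∀ (l₁ : List (BPO.AuxNode V E)) (a : BPO.AuxNode V E) (l₂ : List (BPO.AuxNode V E)),
    l₁.getLast? = some a →
    BPO.walkLen G z (l₁ ++ l₂) = BPO.walkLen G z l₁ + BPO.walkLen G z (a :: l₂)
  | [], a, l₂, h => by simp at h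
  | [x], a, l₂, h => by
      simp only [List.getLast?_singleton, Option.some.injEq] at h
      subst h; simp [BPO.walkLen]
  | x :: y :: t, a, l₂, h => by
      have h' : (y :: t).getLast? = some a := by rwa [List.getLast?_cons_cons] at h
      have ih := walkLen_app G z (y :: t) a l₂ h'
      simp only [List.cons_append, BPO.walkLen, List.append_eq] at ih ⊢
      rw [ih]; ring

theorem sum_zmod (k : ℕ) [NeZero k] (f : ZMod k → ℝ) :
    ∑ n ∈ Finset.range k, f ((n : ℕ) : ZMod k) = ∑ i : ZMod k, f i :=
  Finset.sum_bij' (fun n _ => ((n : ℕ) : ZMod k)) (fun i _ => i.val)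
    (fun a _ => Finset.mem_univ _)
    (fun a _ => Finset.mem_range.2 (ZMod.val_lt a))
    (fun a ha => ZMod.val_cast_of_lt (Finset.mem_range.1 ha))
    (fun a _ => ZMod.natCast_rightInverse a)
    (fun a _ => rfl)

theorem card_zmod (k : ℕ) [NeZero k] (sg : ZMod k → Bool) :
    (((Finset.range k).filter (fun n => sg ((n : ℕ) : ZMod k) = false)).card)
      = ((Finset.univ.filter (fun i : ZMod k => sg i = false)).card) :=
  Finset.card_bij' (fun n _ => ((n : ℕ) : ZMod k)) (fun i _ => i.val)
    (fun a ha => by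
      simp only [Finset.mem_filter, Finset.mem_range] at ha ⊢
      exact ⟨Finset.mem_univ _, ha.2⟩)
    (fun a ha => by
      simp only [Finset.mem_filter, Finset.mem_range, ZMod.natCast_rightInverse a] at ha ⊢
      exact ⟨ZMod.val_lt a, ha.2⟩)
    (fun a ha => ZMod.val_cast_of_lt (Finset.mem_range.1 (Finset.mem_filter.1 ha).1))
    (fun a _ => ZMod.natCast_rightInverse a)

end CWTW
namespace CWTW
variable {V E : Type} [DecidableEq V]

def sgn (k : ℕ) [NeZero k] (sg : ZMod k → Bool) (m : ℕ) : Bool :=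
  decide (Even (((Finset.range m).filter (fun j => sg ((j : ℕ) : ZMod k) = false)).card))

def P (G : E → Finset V) (k : ℕ) [NeZero k] (ve : ZMod k → V) (ed : ZMod k → E)
    (sg : ZMod k → Bool) (n : ℕ) : BPO.AuxNode V E :=
  if sg ((n : ℕ) : ZMod k) then
    (if sg (((n : ℕ) : ZMod k) - 1) then .vert (ve ((n : ℕ) : ZMod k)) (sgn k sg n)
     else .edge (ed ((n : ℕ) : ZMod k)) (sgn k sg n))
  else
    (if sg (((n : ℕ) : ZMod k) - 1) then .edge (ed (((n : ℕ) : ZMod k) - 1)) (sgn k sg n)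
     else .inter (G (ed (((n : ℕ) : ZMod k) - 1)) ∩ G (ed ((n : ℕ) : ZMod k))) (sgn k sg n))

def seg (G : E → Finset V) (k : ℕ) [NeZero k] (ve : ZMod k → V) (ed : ZMod k → E)
    (sg : ZMod k → Bool) (n : ℕ) : List (BPO.AuxNode V E) :=
  if sg ((n : ℕ) : ZMod k) then
    (if sg (((n : ℕ) : ZMod k) - 1) then [BPO.AuxNode.edge (ed ((n : ℕ) : ZMod k)) (sgn k sg n)]
     else []) ++
    (if sg (((n : ℕ) : ZMod k) + 1) then
      [BPO.AuxNode.vert (ve (((n : ℕ) : ZMod k) + 1)) (sgn k sg n)] else [])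
  else
    if sg (((n : ℕ) : ZMod k) + 1) then
      [BPO.AuxNode.edge (ed (((n : ℕ) : ZMod k) + 1)) (!(sgn k sg n))]
    else
      [BPO.AuxNode.inter (G (ed ((n : ℕ) : ZMod k)) ∩ G (ed (((n : ℕ) : ZMod k) + 1)))
        (!(sgn k sg n))]

noncomputable def T (G : E → Finset V) (zhat : V ⊕ E → ℝ) (k : ℕ) [NeZero k]
    (ve : ZMod k → V) (ed : ZMod k → E) (sg : ZMod k → Bool) (i : ZMod k) : ℝ :=
  if sg i then
    (if sg (i - 1) then BPO.sInc (ed i) (ve i) zhat else 0) +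
    (if sg (i + 1) then BPO.sInc (ed i) (ve (i + 1)) zhat else 0)
  else
    if sg (i - 1) then
      (if sg (i + 1) then BPO.sTwo G (ed i) (ed (i - 1)) (ed (i + 1)) zhat
       else BPO.sOne G (ed i) (G (ed i) ∩ G (ed (i + 1))) (ed (i - 1)) zhat)
    else
      (if sg (i + 1) then BPO.sOne G (ed i) (G (ed i) ∩ G (ed (i - 1))) (ed (i + 1)) zhat
       else BPO.sOdd G (ed i) (G (ed i) ∩ G (ed (i - 1))) (G (ed i) ∩ G (ed (i + 1))) zhat)

theorem decide_even_succ (c : ℕ) : decide (Even (c + 1)) = !decide (Even c) := by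
  by_cases h : Even c <;> simp [h, Nat.even_add_one]

theorem sgn_succ (k : ℕ) [NeZero k] (sg : ZMod k → Bool) (n : ℕ) :
    sgn k sg (n + 1) = if sg ((n : ℕ) : ZMod k) then sgn k sg n else !(sgn k sg n) := by
  by_cases h : sg ((n : ℕ) : ZMod k) = false
  · rw [sgn, sgn, Finset.range_add_one, Finset.filter_insert, if_pos h,
      Finset.card_insert_of_notMem (by simp)]
    rw [if_neg (by simp [h]), decide_even_succ]
  · simp only [Bool.not_eq_false] at h
    simp only [sgn, Finset.range_add_one, Finset.filter_insert, h, Bool.true_eq_false, if_false,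
      if_true]

theorem sgn_zero (k : ℕ) [NeZero k] (sg : ZMod k → Bool) : sgn k sg 0 = true := by
  simp [sgn]

theorem lenFun_eq_sum (G : E → Finset V) (zhat : V ⊕ E → ℝ) (k : ℕ) [NeZero k]
    (ve : ZMod k → V) (ed : ZMod k → E) (sg : ZMod k → Bool) :
    BPO.lenFun G k ve ed sg zhat = ∑ i : ZMod k, T G zhat k ve ed sg i := by
  unfold BPO.lenFun
  rw [Finset.sum_filter, Finset.sum_filter, Finset.sum_filter, Finset.sum_filter,
    Finset.sum_filter, Finset.sum_filter, Finset.sum_filter,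
    ← Finset.sum_add_distrib, ← Finset.sum_add_distrib, ← Finset.sum_add_distrib,
    ← Finset.sum_add_distrib, ← Finset.sum_add_distrib, ← Finset.sum_add_distrib]
  refine Finset.sum_congr rfl fun i _ => ?_
  cases h1 : sg (i - 1) <;> cases h2 : sg i <;> cases h3 : sg (i + 1) <;>
    simp [T, h1, h2, h3]

end CWTW
namespace CWTW
variable {V E : Type} [DecidableEq V]

theorem sum_one_nonneg (zhat : V ⊕ E → ℝ) (hbox : ∀ x, 0 ≤ zhat x ∧ zhat x ≤ 1)
    (U : Finset V) : 0 ≤ ∑ u ∈ U, (1 - zhat (Sum.inl u)) :=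
  Finset.sum_nonneg fun u _ => by linarith [(hbox (Sum.inl u)).2]

theorem sum_two_nonneg (zhat : V ⊕ E → ℝ) (hbox : ∀ x, 0 ≤ zhat x ∧ zhat x ≤ 1)
    (U : Finset V) : 0 ≤ ∑ u ∈ U, (2 - 2 * zhat (Sum.inl u)) :=
  Finset.sum_nonneg fun u _ => by linarith [(hbox (Sum.inl u)).2]

theorem sOdd_lb (G : E → Finset V) (zhat : V ⊕ E → ℝ) (hbox : ∀ x, 0 ≤ zhat x ∧ zhat x ≤ 1)
    (f : E) (U W : Finset V) : -1 ≤ BPO.sOdd G f U W zhat := by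
  have h1 := sum_one_nonneg zhat hbox U
  have h2 := sum_one_nonneg zhat hbox W
  have h3 := sum_two_nonneg zhat hbox (G f \ (U ∪ W))
  have h4 := (hbox (Sum.inr f)).1
  unfold BPO.sOdd; linarith

theorem sOne_lb (G : E → Finset V) (zhat : V ⊕ E → ℝ) (hbox : ∀ x, 0 ≤ zhat x ∧ zhat x ≤ 1)
    (f : E) (U : Finset V) (e : E) : -1 ≤ BPO.sOne G f U e zhat := by
  have h1 := sum_one_nonneg zhat hbox U
  have h3 := sum_two_nonneg zhat hbox (G f \ (U ∪ G e))
  have h4 := (hbox (Sum.inr f)).1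
  have h5 := (hbox (Sum.inr e)).2
  unfold BPO.sOne; linarith

theorem sTwo_lb (G : E → Finset V) (zhat : V ⊕ E → ℝ) (hbox : ∀ x, 0 ≤ zhat x ∧ zhat x ≤ 1)
    (f e g : E) : -1 ≤ BPO.sTwo G f e g zhat := by
  have h3 := sum_two_nonneg zhat hbox (G f \ (G e ∪ G g))
  have h4 := (hbox (Sum.inr f)).1
  have h5 := (hbox (Sum.inr e)).2
  have h6 := (hbox (Sum.inr g)).2
  unfold BPO.sTwo; linarith

theorem trip_of (G : E → Finset V) (k : ℕ) [NeZero k] (ve : ZMod k → V) (ed : ZMod k → E)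
    (hmem : ∀ i : ZMod k, ve i ∈ G (ed (i - 1)) ∩ G (ed i))
    (htriple : ∀ i : ZMod k, G (ed (i - 1)) ∩ G (ed i) ∩ G (ed (i + 1)) = ∅)
    (i : ZMod k) : BPO.Trip G (ed (i - 1)) (ed i) (ed (i + 1)) := by
  refine ⟨⟨ve i, hmem i⟩, ⟨ve (i + 1), ?_⟩, htriple i⟩
  have := hmem (i + 1)
  rwa [add_sub_cancel_right] at this

theorem trip_of' (G : E → Finset V) (k : ℕ) [NeZero k] (ve : ZMod k → V) (ed : ZMod k → E)
    (hmem : ∀ i : ZMod k, ve i ∈ G (ed (i - 1)) ∩ G (ed i))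
    (htriple : ∀ i : ZMod k, G (ed (i - 1)) ∩ G (ed i) ∩ G (ed (i + 1)) = ∅)
    (i : ZMod k) : BPO.Trip G (ed (i + 1)) (ed i) (ed (i - 1)) := by
  obtain ⟨h1, h2, h3⟩ := trip_of G k ve ed hmem htriple i
  refine ⟨?_, ?_, ?_⟩
  · obtain ⟨x, hx⟩ := h2
    exact ⟨x, by simp only [Finset.mem_inter] at hx ⊢; tauto⟩
  · obtain ⟨x, hx⟩ := h1
    exact ⟨x, by simp only [Finset.mem_inter] at hx ⊢; tauto⟩
  · rw [Finset.eq_empty_iff_forall_notMem] at h3 ⊢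
    intro x hx
    apply h3 x
    simp only [Finset.mem_inter] at hx ⊢; tauto

end CWTW
namespace CWTW
variable {V E : Type} [DecidableEq V]

set_option maxHeartbeats 1000000 in
theorem step (G : E → Finset V) (zhat : V ⊕ E → ℝ)
    (hbox : ∀ x, 0 ≤ zhat x ∧ zhat x ≤ 1)
    (k : ℕ) [NeZero k] (ve : ZMod k → V) (ed : ZMod k → E) (sg : ZMod k → Bool)
    (hmem : ∀ i : ZMod k, ve i ∈ G (ed (i - 1)) ∩ G (ed i))
    (htriple : ∀ i : ZMod k, G (ed (i - 1)) ∩ G (ed i) ∩ G (ed (i + 1)) = ∅)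
    (n : ℕ) :
    List.Chain' (BPO.auxAdj G) (P G k ve ed sg n :: seg G k ve ed sg n) ∧
    (P G k ve ed sg n :: seg G k ve ed sg n).getLast? = some (P G k ve ed sg (n + 1)) ∧
    BPO.walkLen G zhat (P G k ve ed sg n :: seg G k ve ed sg n)
      ≤ T G zhat k ve ed sg ((n : ℕ) : ZMod k) := by
  have hc1 : ((n + 1 : ℕ) : ZMod k) = ((n : ℕ) : ZMod k) + 1 := by push_cast; ring
  have hsn := sgn_succ k sg n
  have hmem1 := Finset.mem_inter.1 (hmem ((n : ℕ) : ZMod k))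
  have hmem2 : ve (((n : ℕ) : ZMod k) + 1) ∈ G (ed ((n : ℕ) : ZMod k)) ∩ G (ed (((n : ℕ) : ZMod k) + 1)) := by
    have := hmem (((n : ℕ) : ZMod k) + 1)
    rwa [add_sub_cancel_right] at this
  have hmem2' := Finset.mem_inter.1 hmem2
  have htr := trip_of G k ve ed hmem htriple ((n : ℕ) : ZMod k)
  have htr' := trip_of' G k ve ed hmem htriple ((n : ℕ) : ZMod k)
  cases h1 : sg (((n : ℕ) : ZMod k) - 1) <;> cases h2 : sg ((n : ℕ) : ZMod k) <;>
    cases h3 : sg (((n : ℕ) : ZMod k) + 1) <;>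
    rw [h2] at hsn <;> simp only [if_true, if_false, Bool.false_eq_true, ite_true, ite_false] at hsn <;>
    simp only [P, seg, T, hc1, add_sub_cancel_right, h1, h2, h3, hsn, if_true, if_false,
      Bool.false_eq_true, Bool.true_eq_false, ite_true, ite_false, List.append_nil,
      List.nil_append, List.singleton_append, Bool.not_true, Bool.not_false]
  · -- (f,f,f)
    refine ⟨List.isChain_pair.mpr ⟨rfl, ed (((n:ℕ):ZMod k)-1), ed ((n:ℕ):ZMod k),
      ed (((n:ℕ):ZMod k)+1), htr, rfl, rfl⟩, rfl, ?_⟩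
    simp only [BPO.walkLen, BPO.auxLen, add_zero]
    refine le_trans (csInf_le ⟨-1, ?_⟩ ⟨ed (((n:ℕ):ZMod k)-1), ed ((n:ℕ):ZMod k),
      ed (((n:ℕ):ZMod k)+1), htr, rfl, rfl, rfl⟩) (le_of_eq ?_)
    · rintro x ⟨e, f, g, -, -, -, rfl⟩; exact sOdd_lb G zhat hbox f _ _
    · rw [Finset.inter_comm (G (ed (((n:ℕ):ZMod k)-1)))]
  · -- (f,f,t)
    refine ⟨List.isChain_pair.mpr ⟨(Bool.not_not _).symm, ed ((n:ℕ):ZMod k),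
      ed (((n:ℕ):ZMod k)-1), htr', Finset.inter_comm _ _⟩, rfl, ?_⟩
    simp only [BPO.walkLen, BPO.auxLen, add_zero]
    refine le_trans (csInf_le ⟨-1, ?_⟩ ⟨ed ((n:ℕ):ZMod k), ed (((n:ℕ):ZMod k)-1), htr',
      Finset.inter_comm _ _, rfl⟩) (le_of_eq ?_)
    · rintro x ⟨f, g, -, -, rfl⟩; exact sOne_lb G zhat hbox f _ _
    · rw [Finset.inter_comm (G (ed (((n:ℕ):ZMod k)-1)))]
  · -- (f,t,f)
    exact ⟨List.isChain_singleton _, rfl, by norm_num [BPO.walkLen]⟩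
  · -- (f,t,t)
    refine ⟨List.isChain_pair.mpr ⟨rfl, hmem2'.1⟩, rfl, ?_⟩
    simp [BPO.walkLen, BPO.auxLen]
  · -- (t,f,f)
    refine ⟨List.isChain_pair.mpr ⟨rfl, ed ((n:ℕ):ZMod k), ed (((n:ℕ):ZMod k)+1), htr, rfl⟩,
      rfl, ?_⟩
    simp only [BPO.walkLen, BPO.auxLen, add_zero]
    refine le_trans (csInf_le ⟨-1, ?_⟩ ⟨ed ((n:ℕ):ZMod k), ed (((n:ℕ):ZMod k)+1), htr,
      rfl, rfl⟩) le_rfl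
    rintro x ⟨f, g, -, -, rfl⟩; exact sOne_lb G zhat hbox f _ _
  · -- (t,f,t)
    refine ⟨List.isChain_pair.mpr ⟨rfl, ed ((n:ℕ):ZMod k), htr⟩, rfl, ?_⟩
    simp only [BPO.walkLen, BPO.auxLen, add_zero]
    refine le_trans (csInf_le ⟨-1, ?_⟩ ⟨ed ((n:ℕ):ZMod k), htr, rfl⟩) le_rfl
    rintro x ⟨f, -, rfl⟩; exact sTwo_lb G zhat hbox f _ _
  · -- (t,t,f)
    refine ⟨List.isChain_pair.mpr ⟨rfl, hmem1.2⟩, rfl, ?_⟩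
    simp [BPO.walkLen, BPO.auxLen]
  · -- (t,t,t)
    refine ⟨List.isChain_cons_cons.mpr ⟨⟨rfl, hmem1.2⟩, List.isChain_pair.mpr ⟨rfl, hmem2'.1⟩⟩,
      rfl, ?_⟩
    simp [BPO.walkLen, BPO.auxLen]

end CWTW
/-- from an odd signed closed walk in `G` to a twin walk in the
auxiliary graph of length at most `1 + s`, where `s` is the slack of the
corresponding simple odd β-cycle inequality at `ẑ`. -/
theorem closed_walk_to_twin_walk {V E : Type} [DecidableEq V] [Fintype V] [Fintype E]
    (G : E → Finset V) (zhat : V ⊕ E → ℝ) (hz : BPO.memFR G zhat)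
    (k : ℕ) [NeZero k] (ve : ZMod k → V) (ed : ZMod k → E) (sg : ZMod k → Bool)
    (hC : BPO.IsClosedWalk G k ve ed) (hodd : BPO.OddSig k sg) :
    ∃ L : List (BPO.AuxNode V E), BPO.IsTwinWalk G L ∧
      BPO.walkLen G zhat L ≤ 1 + (BPO.lenFun G k ve ed sg zhat - 1) ∧
      (BPO.lenFun G k ve ed sg zhat < 1 → BPO.walkLen G zhat L < 1) := by
  obtain ⟨hk3, hmem, htriple⟩ := hC
  obtain ⟨⟨hbox, hincz, hsrz⟩, hfl1, hfl2⟩ := hz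
  have hmem' : ∀ i : ZMod k, ve i ∈ G (ed (i - 1)) ∩ G (ed i) := hmem
  -- parity
  have hsk : CWTW.sgn k sg k = false := by
    unfold CWTW.sgn
    rw [CWTW.card_zmod k sg]
    unfold BPO.OddSig at hodd
    simp [Nat.not_even_iff_odd.mpr hodd]
  -- build the walk
  have hbuild : ∀ m : ℕ, ∃ L : List (BPO.AuxNode V E),
      L.head? = some (CWTW.P G k ve ed sg 0) ∧
      L.getLast? = some (CWTW.P G k ve ed sg m) ∧
      L.Chain' (BPO.auxAdj G) ∧
      BPO.walkLen G zhat L ≤ ∑ n ∈ Finset.range m, CWTW.T G zhat k ve ed sg ((n : ℕ) : ZMod k) := by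
    intro m
    induction m with
    | zero => exact ⟨[CWTW.P G k ve ed sg 0], rfl, rfl, List.isChain_singleton _,
        by simp [BPO.walkLen]⟩
    | succ m ih =>
      obtain ⟨L, hhead, hlast, hchain, hlen⟩ := ih
      obtain ⟨hch2, hlast2, hlen2⟩ := CWTW.step G zhat hbox k ve ed sg hmem' htriple m
      have hL : L ≠ [] := by intro h; simp [h] at hhead
      refine ⟨L ++ CWTW.seg G k ve ed sg m, ?_, ?_, ?_, ?_⟩
      · rw [List.head?_append_of_ne_nil _ hL]; exact hhead
      · cases hseg : CWTW.seg G k ve ed sg m with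
        | nil =>
          have hPP : some (CWTW.P G k ve ed sg m) = some (CWTW.P G k ve ed sg (m + 1)) := by
            rw [← hlast2, hseg]; rfl
          rw [List.append_nil, hlast, hPP]
        | cons a t =>
          rw [List.getLast?_append_of_ne_nil _ (by simp [hseg]), ← hlast2, hseg,
            List.getLast?_cons_cons]
      · show List.IsChain _ _; rw [List.isChain_append]
        refine ⟨hchain, (List.isChain_cons.mp hch2).2, ?_⟩
        intro x hx y hy
        rw [hlast, Option.mem_some_iff] at hx
        subst hx
        exact (List.isChain_cons.mp hch2).1 y hy
      · rw [CWTW.walkLen_app G zhat L _ _ hlast, Finset.sum_range_succ]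
        linarith
  obtain ⟨L, hhead, hlast, hchain, hlen⟩ := hbuild k
  -- twin endpoints
  have h0 : ((k : ℕ) : ZMod k) = ((0 : ℕ) : ZMod k) := by
    simp [ZMod.natCast_self]
  have htwin : BPO.Twin (CWTW.P G k ve ed sg 0) (CWTW.P G k ve ed sg k) := by
    unfold CWTW.P
    rw [h0, CWTW.sgn_zero, hsk]
    push_cast
    cases hA : sg ((0 : ZMod k)) <;> cases hB : sg ((0 : ZMod k) - 1) <;>
      simp [hA, hB, BPO.Twin]
  -- length bound
  have hlen2 : BPO.walkLen G zhat L ≤ BPO.lenFun G k ve ed sg zhat := by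
    rw [CWTW.lenFun_eq_sum, ← CWTW.sum_zmod k (CWTW.T G zhat k ve ed sg)]
    exact hlen
  exact ⟨L, ⟨hchain, _, _, hhead, hlast, htwin⟩,
    by linarith, fun h => lt_of_le_of_lt hlen2 h⟩
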